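/- Let p > 1 and let f ∈ C¹([0,∞)) satisfy f(0) = 0 and f'(u) > 0 for u > 0, and assume f ∈ RV_ρ with ρ > p−1. Let F(t) = ∫₀ᵗ f(s) ds, p' = p/(p−1), and let φ : (0,∞) → (0,∞) be defined by ∫_{φ(t)}^∞ ds/(p'F(s))^{1/p} = t. Then: (i) −φ'(t) = (p'F(φ(t)))^{1/p} and |φ'(t)|^{p−2}·φ''(t) = (p'/p)·f(φ(t)) for all t > 0; (ii) −φ' ∈ NRVZ_{−r} and φ ∈ NRVZ_{1−r}, where r = (ρ+1)/(ρ+1−p) > 1. -/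

import Mathlib

open Filter MeasureTheory Set Topology

noncomputable section

/-- `f` is regularly varying at infinity of index `ρ`. -/
def IsRV (f : ℝ → ℝ) (ρ : ℝ) : Prop :=
  ∀ ξ : ℝ, 0 < ξ → Tendsto (fun u => f (ξ * u) / f u) atTop (𝓝 (ξ ^ ρ))

/-- `f` is normalized regularly varying at infinity of index `ρ`. -/
def IsNRV (f : ℝ → ℝ) (ρ : ℝ) : Prop :=
  ∃ b : ℝ, 0 < b ∧ ∃ Mstar : ℝ, 0 < Mstar ∧ ∃ φ : ℝ → ℝ,
    ContinuousOn φ (Ici b) ∧ Tendsto φ atTop (𝓝 0) ∧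
    ∀ u, b ≤ u → f u = Mstar * u ^ ρ * Real.exp (∫ t in b..u, φ t / t)

/-- `f` is normalized regularly varying at the origin of index `ρ`. -/
def IsNRVZ (f : ℝ → ℝ) (ρ : ℝ) : Prop := IsNRV (fun u => f (1 / u)) (-ρ)

set_option maxHeartbeats 1600000

lemma isNRV_crit {G e : ℝ → ℝ} {b ρ : ℝ} (hb : 0 < b)
    (hGpos : ∀ u, b ≤ u → 0 < G u)
    (hG : ∀ u, b ≤ u → HasDerivAt G (e u * G u / u) u)
    (he : ContinuousOn e (Ici b))
    (hlim : Tendsto e atTop (𝓝 ρ)) : IsNRV G ρ := by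
  refine ⟨b, hb, G b / b ^ ρ, div_pos (hGpos b le_rfl) (Real.rpow_pos_of_pos hb ρ), fun u => e u - ρ, ?_, ?_, ?_⟩
  · exact he.sub continuousOn_const
  · simpa using hlim.sub_const ρ
  · intro u hu
    have hbu : ∀ x ∈ Icc b u, b ≤ x := fun x hx => hx.1
    have hsub : uIcc b u ⊆ Ici b := by
      rw [uIcc_of_le hu]; exact Icc_subset_Ici_self
    have hposx : ∀ x ∈ uIcc b u, (0:ℝ) < x := fun x hx => lt_of_lt_of_le hb (hsub hx)
    have hie : IntervalIntegrable (fun t => e t / t) volume b u := by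
      apply ContinuousOn.intervalIntegrable
      exact (he.mono hsub).div continuousOn_id (fun x hx => ne_of_gt (hposx x hx))
    have key : ∫ t in b..u, e t / t = Real.log (G u) - Real.log (G b) := by
      apply intervalIntegral.integral_eq_sub_of_hasDerivAt
      · intro x hx
        have hbx : b ≤ x := hsub hx
        have hx0 : (0:ℝ) < x := hposx x hx
        have h1 := hG x hbx
        have h2 : HasDerivAt (fun y => Real.log (G y)) ((e x * G x / x) / G x) x :=
          h1.log (ne_of_gt (hGpos x hbx))
        have hGx : G x ≠ 0 := ne_of_gt (hGpos x hbx)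
        refine h2.congr_deriv ?_
        rw [mul_div_right_comm, mul_div_cancel_right₀ _ hGx]
      · exact hie
    have hione : IntervalIntegrable (fun t => ρ / t) volume b u := by
      apply ContinuousOn.intervalIntegrable
      exact continuousOn_const.div continuousOn_id (fun x hx => ne_of_gt (hposx x hx))
    have split : ∫ t in b..u, (e t - ρ) / t
        = (∫ t in b..u, e t / t) - ∫ t in b..u, ρ / t := by
      rw [← intervalIntegral.integral_sub hie hione]
      congr 1; ext t; ring
    have hlogint : ∫ t in b..u, ρ / t = ρ * (Real.log u - Real.log b) := by
      have : ∀ t, ρ / t = ρ * (1/t) := fun t => by ring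
      simp_rw [this]
      have hu0 : (0:ℝ) < u := lt_of_lt_of_le hb hu
      rw [intervalIntegral.integral_const_mul, integral_one_div]
      · rw [Real.log_div (ne_of_gt hu0) (ne_of_gt hb)]
      · intro h
        exact absurd (hposx 0 h) (lt_irrefl 0)
    have hu0 : (0:ℝ) < u := lt_of_lt_of_le hb hu
    rw [split, key, hlogint, mul_sub, Real.exp_sub, Real.exp_sub, Real.exp_sub,
      Real.exp_log (hGpos u hu), Real.exp_log (hGpos b le_rfl)]
    have e1 : Real.exp (ρ * Real.log u) = u ^ ρ := by
      rw [mul_comm, ← Real.rpow_def_of_pos hu0]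
    have e2 : Real.exp (ρ * Real.log b) = b ^ ρ := by
      rw [mul_comm, ← Real.rpow_def_of_pos hb]
    rw [e1, e2]
    have hbρ : (0:ℝ) < b ^ ρ := Real.rpow_pos_of_pos hb ρ
    have huρ : (0:ℝ) < u ^ ρ := Real.rpow_pos_of_pos hu0 ρ
    have hGb : G b ≠ 0 := ne_of_gt (hGpos b le_rfl)
    field_simp

lemma karamata_direct {f : ℝ → ℝ} {ρ : ℝ} (hρ : -1 < ρ)
    (hcont : ContinuousOn f (Ici 0)) (hmono : MonotoneOn f (Ici 0))
    (h0 : f 0 = 0) (hpos : ∀ a : ℝ, 0 < a → 0 < f a) (hRV : IsRV f ρ) :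
    Tendsto (fun a => (∫ s in (0:ℝ)..a, f s) / (a * f a)) atTop (𝓝 (1/(ρ+1))) := by
  set μ : Measure ℝ := volume.restrict (Ioc (0:ℝ) 1) with hμ
  have hmeas : ∀ᶠ (a:ℝ) in atTop, AEStronglyMeasurable (fun s => f (a*s) / f a) μ := by
    filter_upwards [eventually_gt_atTop (0:ℝ)] with a ha
    have hm : AEStronglyMeasurable (fun s => f (a*s)) μ := by
      apply ContinuousOn.aestronglyMeasurable _ measurableSet_Ioc
      apply hcont.comp (continuous_mul_left a).continuousOn
      intro s hs
      exact mul_nonneg (le_of_lt ha) (le_of_lt hs.1)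
    simpa [div_eq_mul_inv] using hm.mul_const (f a)⁻¹
  have hbound : ∀ᶠ (a:ℝ) in atTop, ∀ᵐ s ∂μ, ‖f (a*s) / f a‖ ≤ (fun _ : ℝ => (1:ℝ)) s := by
    filter_upwards [eventually_ge_atTop (1:ℝ)] with a ha
    rw [hμ, ae_restrict_iff' measurableSet_Ioc]
    apply ae_of_all
    intro s hs
    have ha0 : (0:ℝ) < a := lt_of_lt_of_le one_pos ha
    have hs0 : (0:ℝ) ≤ a * s := mul_nonneg ha0.le hs.1.le
    have h1 : 0 ≤ f (a*s) := h0 ▸ hmono self_mem_Ici hs0 hs0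
    have h2 : f (a*s) ≤ f a := hmono hs0 ha0.le (by nlinarith [hs.2, hs.1.le])
    rw [Real.norm_eq_abs, abs_of_nonneg (div_nonneg h1 (hpos a ha0).le)]
    exact div_le_one_of_le₀ h2 (hpos a ha0).le
  have hint : Integrable (fun _ : ℝ => (1:ℝ)) μ := integrable_const 1
  have hlim : ∀ᵐ s ∂μ, Tendsto (fun a => f (a*s) / f a) atTop (𝓝 (s ^ ρ)) := by
    rw [hμ, ae_restrict_iff' measurableSet_Ioc]
    apply ae_of_all
    intro s hs
    exact (hRV s hs.1).congr (fun u => by rw [mul_comm])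
  have hlim1 : Tendsto (fun a => ∫ s, f (a*s) / f a ∂μ) atTop (𝓝 (∫ s, s ^ ρ ∂μ)) :=
    tendsto_integral_filter_of_dominated_convergence _ hmeas hbound hint hlim
  have hval : ∫ s, s ^ ρ ∂μ = 1/(ρ+1) := by
    rw [hμ, ← intervalIntegral.integral_of_le zero_le_one, integral_rpow (Or.inl hρ),
      Real.one_rpow, Real.zero_rpow (by linarith)]
    ring
  rw [hval] at hlim1
  apply hlim1.congr'
  filter_upwards [eventually_gt_atTop (0:ℝ)] with a ha
  have h1 : ∫ s, f (a*s) / f a ∂μ = (∫ s, f (a*s) ∂μ) / f a := integral_div _ _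
  rw [h1, hμ]
  have h2 : ∫ s in Ioc (0:ℝ) 1, f (a*s) = ∫ s in (0:ℝ)..1, f (a*s) :=
    (intervalIntegral.integral_of_le zero_le_one).symm
  rw [h2, intervalIntegral.integral_comp_mul_left (fun x => f x) (ne_of_gt ha),
    mul_zero, mul_one, smul_eq_mul]
  field_simp

lemma karamata_tail {g : ℝ → ℝ} {κ : ℝ} (hκ : 1 < κ)
    (hcont : ContinuousOn g (Ioi 0))
    (hanti : AntitoneOn g (Ioi 0))
    (hpos : ∀ a : ℝ, 0 < a → 0 < g a)
    (hint : ∀ a : ℝ, 0 < a → IntegrableOn g (Ioi a))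
    (hRV : IsRV g (-κ)) :
    Tendsto (fun a => (∫ s in Ioi a, g s) / (a * g a)) atTop (𝓝 (1/(κ-1))) := by
  set θ : ℝ := (1+κ)/2 with hθ
  have hθ1 : 1 < θ := by rw [hθ]; linarith
  have hθκ : θ < κ := by rw [hθ]; linarith
  -- doubling bound
  have hdl : Tendsto (fun u => g (2*u) / g u) atTop (𝓝 ((2:ℝ) ^ (-κ))) := hRV 2 two_pos
  have hlt : (2:ℝ) ^ (-κ) < (2:ℝ) ^ (-θ) := by
    rw [Real.rpow_lt_rpow_left_iff one_lt_two]; linarith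
  have hev : ∀ᶠ u in atTop, g (2*u) / g u ≤ (2:ℝ) ^ (-θ) :=
    hdl.eventually (eventually_le_nhds hlt)
  obtain ⟨a₁, ha₁⟩ := eventually_atTop.1 hev
  set a₀ : ℝ := max a₁ 1 with ha₀def
  have ha₀1 : (1:ℝ) ≤ a₀ := le_max_right _ _
  have ha₀0 : (0:ℝ) < a₀ := lt_of_lt_of_le one_pos ha₀1
  have hdouble : ∀ u : ℝ, a₀ ≤ u → g (2*u) ≤ (2:ℝ) ^ (-θ) * g u := by
    intro u hu
    have hu0 : 0 < u := lt_of_lt_of_le ha₀0 hu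
    have := ha₁ u (le_trans (le_max_left _ _) hu)
    rw [div_le_iff₀ (hpos u hu0)] at this
    linarith [this]
  have hiter : ∀ n : ℕ, ∀ u : ℝ, a₀ ≤ u → g (2^n * u) ≤ (2:ℝ) ^ (-θ * n) * g u := by
    intro n
    induction n with
    | zero => intro u hu; simp
    | succ n ih =>
      intro u hu
      have hu0 : 0 < u := lt_of_lt_of_le ha₀0 hu
      have h2n : (1:ℝ) ≤ 2^n := one_le_pow₀ one_le_two
      have h1 : a₀ ≤ 2^n * u := le_trans hu (le_mul_of_one_le_left hu0.le h2n)
      have h2 := hdouble (2^n * u) h1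
      have h3 : g (2^(n+1) * u) = g (2 * (2^n * u)) := by ring_nf
      have key : g (2^(n+1) * u) ≤ (2:ℝ)^(-θ) * ((2:ℝ)^(-θ*(n:ℝ)) * g u) := by
        rw [h3]
        refine le_trans h2 ?_
        have hp : (0:ℝ) < (2:ℝ) ^ (-θ) := Real.rpow_pos_of_pos two_pos _
        nlinarith [ih u hu, hp]
      have hcast : (2:ℝ) ^ (-θ * ((n+1:ℕ):ℝ)) = (2:ℝ)^(-θ) * (2:ℝ)^(-θ*(n:ℝ)) := by
        rw [← Real.rpow_add two_pos]
        congr 1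
        push_cast
        ring
      rw [hcast, mul_assoc]
      exact key
  have hbound : ∀ a : ℝ, a₀ ≤ a → ∀ s : ℝ, 1 ≤ s →
      g (a * s) ≤ (2:ℝ)^θ * s^(-θ) * g a := by
    intro a ha s hs
    have ha0 : 0 < a := lt_of_lt_of_le ha₀0 ha
    have hs0 : 0 < s := lt_of_lt_of_le one_pos hs
    set n : ℕ := ⌊Real.logb 2 s⌋₊ with hn
    have hlogb0 : 0 ≤ Real.logb 2 s := Real.logb_nonneg one_lt_two hs
    have h2n_le : (2:ℝ)^n ≤ s := by
      have h1 : (n:ℝ) ≤ Real.logb 2 s := Nat.floor_le hlogb0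
      have := Real.rpow_le_rpow_of_exponent_le one_le_two h1
      rwa [Real.rpow_natCast, Real.rpow_logb two_pos (by norm_num) hs0] at this
    have h2n_gt : s < 2^(n+1) := by
      have h1 : Real.logb 2 s < (n:ℝ) + 1 := Nat.lt_floor_add_one _
      have := Real.rpow_lt_rpow_of_exponent_lt one_lt_two h1
      rw [Real.rpow_logb two_pos (by norm_num) hs0] at this
      calc s < (2:ℝ) ^ ((n:ℝ)+1) := this
        _ = 2^(n+1) := by
          rw [← Real.rpow_natCast 2 (n+1)]
          norm_num
    have hstep1 : g (a * s) ≤ g (2^n * a) := by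
      apply hanti
      · exact mem_Ioi.2 (by positivity)
      · exact mem_Ioi.2 (by positivity)
      · calc (2:ℝ)^n * a ≤ s * a := by nlinarith
          _ = a * s := mul_comm _ _
    have hstep2 : g (2^n * a) ≤ (2:ℝ) ^ (-θ * n) * g a := hiter n a ha
    have hstep3 : (2:ℝ) ^ (-θ * (n:ℝ)) ≤ (2:ℝ)^θ * s^(-θ) := by
      have he : (2:ℝ) ^ (-θ * (n:ℝ)) = ((2:ℝ)^(n:ℕ) : ℝ) ^ (-θ) := by
        rw [← Real.rpow_natCast 2 n, ← Real.rpow_mul (by norm_num)]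
        ring_nf
      rw [he]
      have hs2 : s/2 ≤ (2:ℝ)^(n:ℕ) := by
        have : s ≤ 2 * 2^n := by
          have := h2n_gt.le
          calc s ≤ (2:ℝ)^(n+1) := this
            _ = 2 * 2^n := by ring
        linarith
      have hs2' : 0 < s/2 := by positivity
      have := Real.rpow_le_rpow_of_nonpos hs2' hs2 (by linarith : -θ ≤ 0)
      calc ((2:ℝ)^(n:ℕ) : ℝ) ^ (-θ) ≤ (s/2) ^ (-θ) := this
        _ = (2:ℝ)^θ * s^(-θ) := by
          rw [Real.div_rpow hs0.le two_pos.le, Real.rpow_neg two_pos.le]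
          field_simp [Real.rpow_natCast]
    calc g (a*s) ≤ (2:ℝ) ^ (-θ * n) * g a := le_trans hstep1 hstep2
      _ ≤ (2:ℝ)^θ * s^(-θ) * g a := by
        have := hpos a ha0
        nlinarith [hstep3]
  -- dominated convergence
  set μ : Measure ℝ := volume.restrict (Ioi (1:ℝ)) with hμ
  have hmeas : ∀ᶠ (a:ℝ) in atTop, AEStronglyMeasurable (fun s => g (a*s) / g a) μ := by
    filter_upwards [eventually_gt_atTop (0:ℝ)] with a ha
    have hm : AEStronglyMeasurable (fun s => g (a*s)) μ := by
      apply ContinuousOn.aestronglyMeasurable _ measurableSet_Ioi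
      apply hcont.comp (continuous_mul_left a).continuousOn
      intro s hs
      exact mem_Ioi.2 (mul_pos ha (lt_trans one_pos hs))
    simpa [div_eq_mul_inv] using hm.mul_const (g a)⁻¹
  have hbound2 : ∀ᶠ (a:ℝ) in atTop, ∀ᵐ s ∂μ,
      ‖g (a*s) / g a‖ ≤ (fun s : ℝ => (2:ℝ)^θ * s^(-θ)) s := by
    filter_upwards [eventually_ge_atTop a₀] with a ha
    rw [hμ, ae_restrict_iff' measurableSet_Ioi]
    apply ae_of_all
    intro s hs
    have ha0 : 0 < a := lt_of_lt_of_le ha₀0 ha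
    have hs1 : (1:ℝ) ≤ s := (mem_Ioi.1 hs).le
    have hs0 : (0:ℝ) < s := lt_of_lt_of_le one_pos hs1
    have h1 : 0 < g (a*s) := hpos _ (mul_pos ha0 hs0)
    have h2 : 0 < g a := hpos a ha0
    rw [Real.norm_eq_abs, abs_of_nonneg (div_nonneg h1.le h2.le), div_le_iff₀ h2]
    exact hbound a ha s hs1
  have hintb : Integrable (fun s : ℝ => (2:ℝ)^θ * s^(-θ)) μ := by
    rw [hμ]
    exact (integrableOn_Ioi_rpow_of_lt (by linarith : -θ < -1) one_pos).const_mul _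
  have hlim : ∀ᵐ s ∂μ, Tendsto (fun a => g (a*s) / g a) atTop (𝓝 (s ^ (-κ))) := by
    rw [hμ, ae_restrict_iff' measurableSet_Ioi]
    apply ae_of_all
    intro s hs
    exact (hRV s (lt_trans one_pos (mem_Ioi.1 hs))).congr (fun u => by rw [mul_comm])
  have hlim1 : Tendsto (fun a => ∫ s, g (a*s) / g a ∂μ) atTop (𝓝 (∫ s, s ^ (-κ) ∂μ)) :=
    tendsto_integral_filter_of_dominated_convergence _ hmeas hbound2 hintb hlim
  have hval : ∫ s, s ^ (-κ) ∂μ = 1/(κ-1) := by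
    rw [hμ, integral_Ioi_rpow_of_lt (by linarith : -κ < -1) one_pos, Real.one_rpow]
    have hne : (-κ+1) ≠ 0 := by intro h; linarith
    have hne2 : (κ-1) ≠ 0 := by intro h; linarith
    rw [div_eq_div_iff hne hne2]
    ring
  rw [hval] at hlim1
  apply hlim1.congr'
  filter_upwards [eventually_gt_atTop (0:ℝ)] with a ha
  have h1 : ∫ s, g (a*s) / g a ∂μ = (∫ s, g (a*s) ∂μ) / g a := integral_div _ _
  rw [h1, hμ, MeasureTheory.integral_comp_mul_left_Ioi g 1 ha, mul_one, smul_eq_mul]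
  have h2 : 0 < g a := hpos a ha
  field_simp


set_option maxHeartbeats 1600000 in
/-- Properties of the function `φ` defined by `∫_{φ(t)}^∞ (p'F(s))^{-1/p} ds = t`,
where `F(t) = ∫₀ᵗ f(s) ds`, `p' = p/(p-1)`, `f ∈ C¹([0,∞))` with `f(0) = 0`,
`f' > 0` on `(0,∞)`, and `f ∈ RV_ρ` with `ρ > p - 1`:
(i) `-φ'(t) = (p'F(φ(t)))^{1/p}` and `|φ'(t)|^{p-2} φ''(t) = (p'/p) f(φ(t))`;
(ii) `-φ' ∈ NRVZ_{-r}` and `φ ∈ NRVZ_{1-r}`, where `r = (ρ+1)/(ρ+1-p) > 1`. -/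
theorem phi_properties (p ρ : ℝ) (hp : 1 < p) (f : ℝ → ℝ)
    (hfC : ContDiffOn ℝ 1 f (Ici (0:ℝ))) (hf0 : f 0 = 0)
    (hf' : ∀ u : ℝ, 0 < u → 0 < deriv f u)
    (hRV : IsRV f ρ) (hρ : p - 1 < ρ)
    (F : ℝ → ℝ) (hF : ∀ t, F t = ∫ s in (0:ℝ)..t, f s)
    (φ : ℝ → ℝ) (hφpos : ∀ t : ℝ, 0 < t → 0 < φ t)
    (hφ : ∀ t : ℝ, 0 < t →
      (∫ s in Ioi (φ t), ((p / (p - 1)) * F s) ^ (-(1 / p))) = t)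
    (r : ℝ) (hr : r = (ρ + 1) / (ρ + 1 - p)) :
    (∀ t : ℝ, 0 < t →
        deriv φ t = -(((p / (p - 1)) * F (φ t)) ^ (1 / p)) ∧
        |deriv φ t| ^ (p - 2) * deriv (deriv φ) t = (p / (p - 1)) / p * f (φ t)) ∧
    1 < r ∧
    IsNRVZ (fun t => -deriv φ t) (-r) ∧
    IsNRVZ φ (1 - r) := by
  have hp0 : (0:ℝ) < p := lt_trans one_pos hp
  have hp1 : (0:ℝ) < p - 1 := by linarith
  have hp' : (0:ℝ) < p / (p - 1) := by positivity
  have hρ0 : (0:ℝ) < ρ := by linarith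
  have hρ1 : (-1:ℝ) < ρ := by linarith
  have hρp : (0:ℝ) < ρ + 1 - p := by linarith
  -- basic facts about f
  have hfc : ContinuousOn f (Ici 0) := hfC.continuousOn
  have hfmono : StrictMonoOn f (Ici 0) := by
    apply strictMonoOn_of_deriv_pos (convex_Ici 0) hfc
    intro x hx
    rw [interior_Ici] at hx
    exact hf' x hx
  have hfpos : ∀ a : ℝ, 0 < a → 0 < f a := fun a ha =>
    hf0 ▸ hfmono self_mem_Ici (mem_Ici.2 ha.le) ha
  have hfnn : ∀ a : ℝ, 0 ≤ a → 0 ≤ f a := by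
    intro a ha
    rcases eq_or_lt_of_le ha with h | h
    · rw [← h, hf0]
    · exact (hfpos a h).le
  have hfii : ∀ a b : ℝ, 0 ≤ a → IntervalIntegrable f volume a b → True := fun _ _ _ _ => trivial
  -- facts about F
  have hFii : ∀ a b : ℝ, 0 ≤ a → a ≤ b → IntervalIntegrable f volume a b := by
    intro a b ha hab
    apply ContinuousOn.intervalIntegrable
    apply hfc.mono
    rw [uIcc_of_le hab]
    intro x hx
    exact le_trans ha hx.1
  have hFd : ∀ a : ℝ, 0 < a → HasDerivAt F (f a) a := by
    intro a ha
    have h1 : HasDerivAt (fun t => ∫ s in (0:ℝ)..t, f s) (f a) a := by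
      apply intervalIntegral.integral_hasDerivAt_right (hFii 0 a le_rfl ha.le)
      · exact ContinuousOn.stronglyMeasurableAtFilter isOpen_Ioi
          (hfc.mono (Ioi_subset_Ici le_rfl)) a ha
      · exact hfc.continuousAt (Ici_mem_nhds ha)
    exact h1.congr_of_eventuallyEq (Filter.Eventually.of_forall hF)
  have hFsub : ∀ a b : ℝ, 0 ≤ a → a ≤ b → F b = F a + ∫ s in a..b, f s := by
    intro a b ha hab
    rw [hF a, hF b, intervalIntegral.integral_add_adjacent_intervals (hFii 0 a le_rfl ha)
      (hFii a b ha hab)]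
  have hFpos : ∀ a : ℝ, 0 < a → 0 < F a := by
    intro a ha
    rw [hF a]
    apply intervalIntegral.intervalIntegral_pos_of_pos_on (hFii 0 a le_rfl ha.le)
      (fun x hx => hfpos x hx.1) ha
  have hFmono : ∀ a b : ℝ, 0 < a → a ≤ b → F a ≤ F b := by
    intro a b ha hab
    rw [hFsub a b ha.le hab]
    have : 0 ≤ ∫ s in a..b, f s :=
      intervalIntegral.integral_nonneg hab (fun x hx => hfnn x (le_trans ha.le hx.1))
    linarith
  have hFcont : ContinuousOn F (Ioi 0) := fun a ha =>
    ((hFd a ha).continuousAt).continuousWithinAt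
  -- the integrand g
  set g : ℝ → ℝ := fun s => ((p / (p - 1)) * F s) ^ (-(1 / p)) with hgdef
  have hxpos : ∀ a : ℝ, 0 < a → 0 < (p / (p - 1)) * F a := fun a ha =>
    mul_pos hp' (hFpos a ha)
  have hgpos : ∀ a : ℝ, 0 < a → 0 < g a := fun a ha =>
    Real.rpow_pos_of_pos (hxpos a ha) _
  have hgcont : ContinuousOn g (Ioi 0) := by
    apply ContinuousOn.rpow_const (continuousOn_const.mul hFcont)
    intro a ha
    exact Or.inl (ne_of_gt (hxpos a ha))
  have hganti : AntitoneOn g (Ioi 0) := by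
    intro a ha b hb hab
    exact Real.rpow_le_rpow_of_nonpos (hxpos a ha)
      (mul_le_mul_of_nonneg_left (hFmono a b ha hab) hp'.le)
      (neg_nonpos.2 (by positivity))
  -- integrability of g on tails
  have hgint : ∀ a : ℝ, 0 < a → IntegrableOn g (Ioi a) := by
    intro a ha
    have h1 : IntegrableOn g (Ioi (φ 1)) := by
      by_contra h
      have h2 := hφ 1 one_pos
      rw [MeasureTheory.integral_undef h] at h2
      norm_num at h2
    have hK1 : a ≤ max a (φ 1) := le_max_left _ _
    have hK2 : φ 1 ≤ max a (φ 1) := le_max_right _ _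
    have h2 : IntegrableOn g (Ioc a (max a (φ 1))) := by
      apply IntegrableOn.mono_set _ Ioc_subset_Icc_self
      apply ContinuousOn.integrableOn_Icc
      apply hgcont.mono
      intro x hx
      exact lt_of_lt_of_le ha hx.1
    have h3 : IntegrableOn g (Ioi (max a (φ 1))) := h1.mono_set (Ioi_subset_Ioi hK2)
    apply (h2.union h3).mono_set
    intro x hx
    rcases le_or_gt x (max a (φ 1)) with h | h
    · exact Or.inl ⟨hx, h⟩
    · exact Or.inr h
  set ψ : ℝ → ℝ := fun a => ∫ s in Ioi a, g s with hψdef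
  have hψφ : ∀ t : ℝ, 0 < t → ψ (φ t) = t := fun t ht => hφ t ht
  have hψsub : ∀ a b : ℝ, 0 < a → a ≤ b → ψ a = (∫ s in Ioc a b, g s) + ψ b := by
    intro a b ha hab
    rw [hψdef]
    simp only
    rw [← Ioc_union_Ioi_eq_Ioi hab, MeasureTheory.setIntegral_union
      (Ioc_disjoint_Ioi le_rfl) measurableSet_Ioi
      ((hgint a ha).mono_set Ioc_subset_Ioi_self)
      ((hgint a ha).mono_set (Ioi_subset_Ioi hab))]
  have hIocpos : ∀ a b : ℝ, 0 < a → a < b → 0 < ∫ s in Ioc a b, g s := by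
    intro a b ha hab
    rw [← intervalIntegral.integral_of_le hab.le]
    apply intervalIntegral.intervalIntegral_pos_of_pos_on _ _ hab
    · apply ContinuousOn.intervalIntegrable
      apply hgcont.mono
      rw [uIcc_of_le hab.le]
      intro x hx
      exact lt_of_lt_of_le ha hx.1
    · intro x hx
      exact hgpos x (lt_trans ha hx.1)
  have hψnn : ∀ a : ℝ, 0 < a → 0 ≤ ψ a := by
    intro a ha
    apply MeasureTheory.setIntegral_nonneg measurableSet_Ioi
    intro x hx
    exact (hgpos x (lt_trans ha hx)).le
  have hψpos : ∀ a : ℝ, 0 < a → 0 < ψ a := by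
    intro a ha
    rw [hψsub a (a+1) ha (by linarith)]
    have h1 := hIocpos a (a+1) ha (by linarith)
    have h2 := hψnn (a+1) (by linarith)
    linarith
  have hψanti : ∀ a b : ℝ, 0 < a → a < b → ψ b < ψ a := by
    intro a b ha hab
    rw [hψsub a b ha hab.le]
    linarith [hIocpos a b ha hab]
  have hψantile : ∀ a b : ℝ, 0 < a → a ≤ b → ψ b ≤ ψ a := by
    intro a b ha hab
    rcases eq_or_lt_of_le hab with h | h
    · rw [h]
    · exact (hψanti a b ha h).le
  have hφψ : ∀ a : ℝ, 0 < a → φ (ψ a) = a := by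
    intro a ha
    have hpa := hψpos a ha
    have h1 : ψ (φ (ψ a)) = ψ a := hψφ _ hpa
    have h2 : 0 < φ (ψ a) := hφpos _ hpa
    rcases lt_trichotomy (φ (ψ a)) a with h | h | h
    · have := hψanti _ _ h2 h
      rw [h1] at this
      exact absurd this (lt_irrefl _)
    · exact h
    · have := hψanti _ _ ha h
      rw [h1] at this
      exact absurd this (lt_irrefl _)
  have hφgt : ∀ M t : ℝ, 0 < M → 0 < t → t < ψ M → M < φ t := by
    intro M t hM ht hlt
    by_contra h
    push_neg at h
    have h2 := hψantile (φ t) M (hφpos t ht) h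
    rw [hψφ t ht] at h2
    linarith
  have hφlt : ∀ M t : ℝ, 0 < M → 0 < t → ψ M < t → φ t < M := by
    intro M t hM ht hlt
    by_contra h
    push_neg at h
    have h2 := hψantile M (φ t) hM h
    rw [hψφ t ht] at h2
    linarith
  have hφcont : ∀ t : ℝ, 0 < t → ContinuousAt φ t := by
    intro t ht
    rw [ContinuousAt, Metric.tendsto_nhds]
    intro ε hε
    set a₀ : ℝ := φ t with ha₀
    have ha₀0 : 0 < a₀ := hφpos t ht
    set ε' : ℝ := min (ε/2) (a₀/2) with hε'
    have hε'0 : 0 < ε' := lt_min (by linarith) (by linarith)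
    have hlo : 0 < a₀ - ε' := by
      have : ε' ≤ a₀/2 := min_le_right _ _
      linarith
    have h1 : ψ (a₀ + ε') < t := by
      have := hψanti a₀ (a₀ + ε') ha₀0 (by linarith)
      rwa [ha₀, hψφ t ht] at this
    have h2 : t < ψ (a₀ - ε') := by
      have := hψanti (a₀ - ε') a₀ hlo (by linarith)
      rwa [ha₀, hψφ t ht] at this
    have hmem : Ioo (ψ (a₀ + ε')) (ψ (a₀ - ε')) ∈ 𝓝 t :=
      Ioo_mem_nhds h1 h2
    filter_upwards [hmem] with x hx
    have hx0 : 0 < x := lt_trans (hψpos _ (by linarith)) hx.1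
    have hgt : a₀ - ε' < φ x := hφgt _ _ hlo hx0 hx.2
    have hlt' : φ x < a₀ + ε' := hφlt _ _ (by linarith) hx0 hx.1
    rw [Real.dist_eq, abs_lt]
    have : ε' ≤ ε/2 := min_le_left _ _
    exact ⟨by linarith, by linarith⟩
  have hψd : ∀ a : ℝ, 0 < a → HasDerivAt ψ (-(g a)) a := by
    intro a ha
    have hc : a < a + 1 := by linarith
    have hint2 : IntervalIntegrable g volume a (a+1) := by
      apply ContinuousOn.intervalIntegrable
      apply hgcont.mono
      rw [uIcc_of_le hc.le]
      intro x hx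
      exact lt_of_lt_of_le ha hx.1
    have h1 : HasDerivAt (fun u => ∫ s in u..(a+1), g s) (-(g a)) a := by
      apply intervalIntegral.integral_hasDerivAt_left hint2
      · exact ContinuousOn.stronglyMeasurableAtFilter isOpen_Ioi hgcont a ha
      · exact hgcont.continuousAt (Ioi_mem_nhds ha)
    have h2 : HasDerivAt (fun u => (∫ s in u..(a+1), g s) + ψ (a+1)) (-(g a)) a :=
      h1.add_const _
    apply h2.congr_of_eventuallyEq
    filter_upwards [Ioo_mem_nhds ha hc] with x hx
    rw [hψsub x (a+1) hx.1 hx.2.le, ← intervalIntegral.integral_of_le hx.2.le]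
  -- derivative of φ
  set H : ℝ → ℝ := fun a => ((p / (p - 1)) * F a) ^ (1/p) with hHdef
  have hHpos : ∀ a : ℝ, 0 < a → 0 < H a := fun a ha =>
    Real.rpow_pos_of_pos (hxpos a ha) _
  have hginv : ∀ a : ℝ, 0 < a → (g a)⁻¹ = H a := by
    intro a ha
    rw [hgdef, hHdef]
    simp only
    rw [Real.rpow_neg (hxpos a ha).le, inv_inv]
  have hφd : ∀ t : ℝ, 0 < t → HasDerivAt φ (-(H (φ t))) t := by
    intro t ht
    have h0 : 0 < φ t := hφpos t ht
    have h1 : HasDerivAt ψ (-(g (φ t))) (φ t) := hψd _ h0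
    have h2 : (∀ᶠ y in 𝓝 t, ψ (φ y) = y) := by
      filter_upwards [Ioi_mem_nhds ht] with y hy using hψφ y hy
    have h3 : HasDerivAt φ (-(g (φ t)))⁻¹ t :=
      HasDerivAt.of_local_left_inverse (hφcont t ht) h1
        (by simpa using (hgpos _ h0).ne') h2
    have h4 : (-(g (φ t)))⁻¹ = -(H (φ t)) := by
      rw [inv_neg, hginv _ h0]
    rwa [h4] at h3
  set dH : ℝ → ℝ := fun a => 1/p * ((p / (p - 1)) * F a) ^ (1/p - 1) * ((p / (p - 1)) * f a)
    with hdHdef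
  have hHd : ∀ a : ℝ, 0 < a → HasDerivAt H (dH a) a := by
    intro a ha
    rw [hdHdef]
    simp only
    have h1 : HasDerivAt (fun x => (p / (p - 1)) * F x) ((p / (p - 1)) * f a) a :=
      (hFd a ha).const_mul _
    have h2 := Real.hasDerivAt_rpow_const (x := (p / (p - 1)) * F a) (p := 1/p)
      (Or.inl (hxpos a ha).ne')
    exact h2.comp a h1
  have hD2 : ∀ t : ℝ, 0 < t → deriv (deriv φ) t =
      1/p * ((p / (p - 1)) * F (φ t)) ^ (1/p - 1) * ((p / (p - 1)) * f (φ t)) * H (φ t) := by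
    intro t ht
    have hEv : deriv φ =ᶠ[𝓝 t] (fun s => -(H (φ s))) := by
      filter_upwards [Ioi_mem_nhds ht] with s hs using (hφd s hs).deriv
    rw [hEv.deriv_eq]
    have h1 : HasDerivAt (fun s => -(H (φ s))) (-(dH (φ t) * (-(H (φ t))))) t :=
      (((hHd (φ t) (hφpos t ht)).comp t (hφd t ht)).neg)
    rw [h1.deriv, hdHdef]
    ring
  have parti : ∀ t : ℝ, 0 < t →
      deriv φ t = -(((p / (p - 1)) * F (φ t)) ^ (1 / p)) ∧
      |deriv φ t| ^ (p - 2) * deriv (deriv φ) t = (p / (p - 1)) / p * f (φ t) := by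
    intro t ht
    have h0 : 0 < φ t := hφpos t ht
    have hx0 : 0 < (p / (p - 1)) * F (φ t) := hxpos _ h0
    have hd1 : deriv φ t = -(H (φ t)) := (hφd t ht).deriv
    constructor
    · rw [hd1, hHdef]
    · have habs : |deriv φ t| = H (φ t) := by
        rw [hd1, abs_neg, abs_of_pos (hHpos _ h0)]
      rw [habs, hD2 t ht, hHdef]
      simp only
      set x : ℝ := (p / (p - 1)) * F (φ t) with hxd
      rw [← Real.rpow_mul hx0.le]
      rw [show x ^ (1/p*(p-2)) * (1/p * x ^ (1/p-1) * (p / (p-1) * f (φ t)) * x ^ (1/p))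
          = 1/p * (p / (p-1) * f (φ t)) * (x ^ (1/p*(p-2)) * x ^ (1/p-1) * x ^ (1/p)) by ring]
      rw [← Real.rpow_add hx0, ← Real.rpow_add hx0]
      rw [show 1/p*(p-2) + (1/p-1) + 1/p = 0 by field_simp; ring]
      rw [Real.rpow_zero, mul_one]
      ring
  -- Karamata limits
  have K1 : Tendsto (fun a => F a / (a * f a)) atTop (𝓝 (1/(ρ+1))) := by
    apply (karamata_direct hρ1 hfc hfmono.monotoneOn hf0 hfpos hRV).congr'
    filter_upwards with a
    rw [hF a]
  have K1' : Tendsto (fun a => a * f a / F a) atTop (𝓝 (ρ+1)) := by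
    have h1 := K1.inv₀ (by positivity : (1:ℝ)/(ρ+1) ≠ 0)
    rw [one_div, inv_inv] at h1
    apply h1.congr
    intro a
    rw [inv_div]
  have FRV : IsRV F (ρ+1) := by
    intro ξ hξ
    have hmul : Tendsto (fun a : ℝ => ξ * a) atTop atTop :=
      Tendsto.const_mul_atTop hξ tendsto_id
    have T1 : Tendsto (fun a => F (ξ*a) / ((ξ*a) * f (ξ*a))) atTop (𝓝 (1/(ρ+1))) :=
      K1.comp hmul
    have T4 : Tendsto (fun a => (F (ξ*a) / ((ξ*a) * f (ξ*a))) * (ξ * (f (ξ*a) / f a))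
        * (a * f a / F a)) atTop (𝓝 ((1/(ρ+1)) * (ξ * ξ^ρ) * (ρ+1))) :=
      (T1.mul (tendsto_const_nhds.mul (hRV ξ hξ))).mul K1'
    have hval : (1/(ρ+1)) * (ξ * ξ^ρ) * (ρ+1) = ξ^(ρ+1) := by
      rw [Real.rpow_add_one (ne_of_gt hξ)]
      field_simp
    rw [hval] at T4
    apply T4.congr'
    filter_upwards [eventually_gt_atTop (0:ℝ)] with a ha
    have h1 : 0 < ξ * a := mul_pos hξ ha
    have h2 : f (ξ*a) ≠ 0 := (hfpos _ h1).ne'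
    have h3 : f a ≠ 0 := (hfpos _ ha).ne'
    have h4 : F a ≠ 0 := (hFpos _ ha).ne'
    field_simp
  have hκ1 : 1 < (ρ+1)/p := (one_lt_div hp0).2 (by linarith)
  have gRV : IsRV g (-((ρ+1)/p)) := by
    intro ξ hξ
    have h1 := FRV ξ hξ
    have h2 : Tendsto (fun a => (F (ξ*a) / F a) ^ (-(1/p))) atTop
        (𝓝 ((ξ^(ρ+1)) ^ (-(1/p)))) :=
      h1.rpow_const (Or.inl (Real.rpow_pos_of_pos hξ _).ne')
    have hval : (ξ^(ρ+1)) ^ (-(1/p)) = ξ ^ (-((ρ+1)/p)) := by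
      rw [← Real.rpow_mul hξ.le]
      congr 1
      field_simp
    rw [hval] at h2
    apply h2.congr'
    filter_upwards [eventually_gt_atTop (0:ℝ)] with a ha
    have h1a : 0 < ξ * a := mul_pos hξ ha
    have hc : F (ξ*a) / F a = ((p / (p - 1)) * F (ξ*a)) / ((p / (p - 1)) * F a) :=
      (mul_div_mul_left _ _ (ne_of_gt hp')).symm
    rw [hc, Real.div_rpow (hxpos _ h1a).le (hxpos _ ha).le, hgdef]
  have K2 : Tendsto (fun a => ψ a / (a * g a)) atTop (𝓝 (1/((ρ+1)/p - 1))) :=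
    karamata_tail hκ1 hgcont hganti hgpos hgint gRV
  have hr1 : (1:ℝ)/((ρ+1)/p - 1) = r - 1 := by
    rw [hr, show (ρ+1)/p - 1 = (ρ+1-p)/p by field_simp, one_div_div,
      show (ρ+1)/(ρ+1-p) - 1 = p/(ρ+1-p) by field_simp; ring]
  have LimB : Tendsto (fun a => ψ a * H a / a) atTop (𝓝 (r - 1)) := by
    rw [← hr1]
    apply K2.congr'
    filter_upwards [eventually_gt_atTop (0:ℝ)] with a ha
    rw [← hginv a ha, mul_comm a (g a), ← div_div, div_eq_mul_inv]
    ring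
  have LimA : Tendsto (fun a => ψ a * dH a) atTop (𝓝 r) := by
    have T : Tendsto (fun a => 1/p * (ψ a * H a / a) * (a * f a / F a)) atTop
        (𝓝 (1/p * (r-1) * (ρ+1))) :=
      (tendsto_const_nhds.mul LimB).mul K1'
    have hval : 1/p * (r-1) * (ρ+1) = r := by
      rw [hr]
      field_simp
      ring
    rw [hval] at T
    apply T.congr'
    filter_upwards [eventually_gt_atTop (0:ℝ)] with a ha
    have h4 : F a ≠ 0 := (hFpos _ ha).ne'
    have hxsplit : ((p / (p - 1)) * F a) ^ (1/p - 1)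
        = H a / ((p / (p - 1)) * F a) := by
      rw [hHdef]
      simp only
      rw [Real.rpow_sub (hxpos a ha), Real.rpow_one]
    rw [hdHdef]
    simp only
    rw [hxsplit]
    have h5 : a ≠ 0 := ha.ne'
    field_simp
  -- transfer limits to t → 0+
  have hφtop : Tendsto φ (𝓝[>] (0:ℝ)) atTop := by
    rw [tendsto_atTop]
    intro M
    have hM'0 : (0:ℝ) < max M 1 := lt_of_lt_of_le one_pos (le_max_right _ _)
    have hmem : Ioo (0:ℝ) (ψ (max M 1)) ∈ 𝓝[>] (0:ℝ) :=
      Ioo_mem_nhdsGT_of_mem ⟨le_rfl, hψpos _ hM'0⟩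
    filter_upwards [hmem] with t ht
    exact le_of_lt (lt_of_le_of_lt (le_max_left M 1) (hφgt _ t hM'0 ht.1 ht.2))
  have hinv : Tendsto (fun u : ℝ => 1/u) atTop (𝓝[>] (0:ℝ)) := by
    rw [tendsto_nhdsWithin_iff]
    constructor
    · simpa [one_div] using tendsto_inv_atTop_zero
    · filter_upwards [eventually_gt_atTop (0:ℝ)] with u hu
      exact mem_Ioi.2 (by positivity)
  have hucomp : Tendsto (fun u : ℝ => φ (1/u)) atTop atTop := hφtop.comp hinv
  have huev : ∀ᶠ u : ℝ in atTop, 0 < 1/u := by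
    filter_upwards [eventually_gt_atTop (0:ℝ)] with u hu
    positivity
  have eA : Tendsto (fun u : ℝ => 1/u * dH (φ (1/u))) atTop (𝓝 r) := by
    apply (LimA.comp hucomp).congr'
    filter_upwards [huev] with u hu
    simp only [Function.comp]
    rw [hψφ _ hu]
  have eB : Tendsto (fun u : ℝ => 1/u * H (φ (1/u)) / φ (1/u)) atTop (𝓝 (r - 1)) := by
    apply (LimB.comp hucomp).congr'
    filter_upwards [huev] with u hu
    simp only [Function.comp]
    rw [hψφ _ hu]
  -- continuity helpers
  have hφconOn : ContinuousOn φ (Ioi 0) := fun t ht => (hφcont t ht).continuousWithinAt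
  have hinvcont : ContinuousOn (fun u : ℝ => 1/u) (Ici (1:ℝ)) := by
    apply continuousOn_const.div continuousOn_id
    intro u hu
    exact ne_of_gt (lt_of_lt_of_le one_pos hu)
  have hinvmap : ∀ u ∈ Ici (1:ℝ), 1/u ∈ Ioi (0:ℝ) := by
    intro u hu
    have h1 : (0:ℝ) < u := lt_of_lt_of_le one_pos hu
    exact mem_Ioi.2 (by positivity)
  have hinvc : ContinuousOn (fun u : ℝ => φ (1/u)) (Ici 1) :=
    hφconOn.comp hinvcont hinvmap
  have hmap2 : ∀ u ∈ Ici (1:ℝ), φ (1/u) ∈ Ioi (0:ℝ) := by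
    intro u hu
    have h1 : (0:ℝ) < u := lt_of_lt_of_le one_pos hu
    exact mem_Ioi.2 (hφpos _ (by positivity))
  have hdHcont : ContinuousOn dH (Ioi 0) := by
    rw [hdHdef]
    exact (continuousOn_const.mul ((continuousOn_const.mul hFcont).rpow_const
      (fun a ha => Or.inl (hxpos a ha).ne'))).mul
      (continuousOn_const.mul (hfc.mono (fun x hx => mem_Ici.2 (le_of_lt (mem_Ioi.1 hx)))))
  have hHcont : ContinuousOn H (Ioi 0) := by
    rw [hHdef]
    exact (continuousOn_const.mul hFcont).rpow_const (fun a ha => Or.inl (hxpos a ha).ne')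
  have hrgt : 1 < r := by
    rw [hr]
    exact (one_lt_div hρp).2 (by linarith)
  have hNA : IsNRV (fun u : ℝ => -deriv φ (1/u)) r := by
    apply isNRV_crit (e := fun u : ℝ => 1/u * dH (φ (1/u))) one_pos _ _ _ eA
    · intro u hu
      have hu0' : (0:ℝ) < u := lt_of_lt_of_le one_pos hu
      have hu0 : (0:ℝ) < 1/u := by positivity
      show 0 < -deriv φ (1/u)
      rw [(hφd _ hu0).deriv, neg_neg]
      exact hHpos _ (hφpos _ hu0)
    · intro u hu
      have hu0' : (0:ℝ) < u := lt_of_lt_of_le one_pos hu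
      have hu0 : (0:ℝ) < 1/u := by positivity
      have hφu : 0 < φ (1/u) := hφpos _ hu0
      have hinner : HasDerivAt (fun x : ℝ => 1/x) (-(1/u^2)) u := by
        simpa [one_div] using hasDerivAt_inv (ne_of_gt hu0')
      have hmid : HasDerivAt (fun x : ℝ => φ (1/x)) ((-(H (φ (1/u)))) * (-(1/u^2))) u :=
        (hφd _ hu0).comp u hinner
      have houter : HasDerivAt (fun x : ℝ => H (φ (1/x)))
          (dH (φ (1/u)) * ((-(H (φ (1/u)))) * (-(1/u^2)))) u :=
        by have := (hHd _ hφu).comp u hmid; exact this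
      have hEv : (fun x : ℝ => -deriv φ (1/x)) =ᶠ[𝓝 u] (fun x : ℝ => H (φ (1/x))) := by
        filter_upwards [Ioi_mem_nhds hu0'] with x hx
        rw [mem_Ioi] at hx
        have hx0 : (0:ℝ) < 1/x := by positivity
        rw [(hφd _ hx0).deriv, neg_neg]
      have hD : HasDerivAt (fun x : ℝ => -deriv φ (1/x))
          (dH (φ (1/u)) * ((-(H (φ (1/u)))) * (-(1/u^2)))) u :=
        houter.congr_of_eventuallyEq hEv
      have hGu : -deriv φ (1/u) = H (φ (1/u)) := by
        rw [(hφd _ hu0).deriv, neg_neg]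
      have hkey : (1/u * dH (φ (1/u))) * (-deriv φ (1/u)) / u
          = dH (φ (1/u)) * ((-(H (φ (1/u)))) * (-(1/u^2))) := by
        rw [hGu]
        ring
      show HasDerivAt (fun u : ℝ => -deriv φ (1/u)) ((1/u * dH (φ (1/u))) * (-deriv φ (1/u)) / u) u
      rw [hkey]
      exact hD
    · exact hinvcont.mul (hdHcont.comp hinvc hmap2)
  have hNB : IsNRV (fun u : ℝ => φ (1/u)) (r - 1) := by
    apply isNRV_crit (e := fun u : ℝ => 1/u * H (φ (1/u)) / φ (1/u)) one_pos _ _ _ eB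
    · intro u hu
      have hu0' : (0:ℝ) < u := lt_of_lt_of_le one_pos hu
      exact hφpos _ (by positivity)
    · intro u hu
      have hu0' : (0:ℝ) < u := lt_of_lt_of_le one_pos hu
      have hu0 : (0:ℝ) < 1/u := by positivity
      have hφu : 0 < φ (1/u) := hφpos _ hu0
      have hinner : HasDerivAt (fun x : ℝ => 1/x) (-(1/u^2)) u := by
        simpa [one_div] using hasDerivAt_inv (ne_of_gt hu0')
      have hmid : HasDerivAt (fun x : ℝ => φ (1/x)) ((-(H (φ (1/u)))) * (-(1/u^2))) u :=
        (hφd _ hu0).comp u hinner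
      have hkey : (1/u * H (φ (1/u)) / φ (1/u)) * (φ (1/u)) / u
          = (-(H (φ (1/u)))) * (-(1/u^2)) := by
        field_simp
      show HasDerivAt (fun u : ℝ => φ (1/u)) ((1/u * H (φ (1/u)) / φ (1/u)) * (φ (1/u)) / u) u
      rw [hkey]
      exact hmid
    · exact (hinvcont.mul (hHcont.comp hinvc hmap2)).div hinvc
        (fun u hu => (hφpos _ (one_div_pos.2 (lt_of_lt_of_le one_pos hu))).ne')
  refine ⟨parti, hrgt, ?_, ?_⟩
  · show IsNRV (fun u : ℝ => -deriv φ (1/u)) (-(-r))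
    rw [neg_neg]
    exact hNA
  · show IsNRV (fun u : ℝ => φ (1/u)) (-(1-r))
    rw [show -(1-r) = r - 1 by ring]
    exact hNB
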